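/- Let φ : Ω → L(E) be strongly continuous. A complex number λ belongs to the resolvent set of the multiplication operator (M_φ, D(M_φ)) on C_0(Ω, E) if and only if λ ∈ ρ(φ(x)) for all x ∈ Ω and sup_{x∈Ω} ‖(λ - φ(x))⁻¹‖_{L(E)} < ∞. Equivalently, σ(M_φ) = { λ ∈ ℂ : λ ∈ σ(φ(x)) for some x ∈ Ω, or sup_{x∈Ω} ‖(λ - φ(x))⁻¹‖ = ∞ }. -/

import Mathlib

open ZeroAtInfty Filter Set Metric

namespace MultOpAux

variable {Ω E : Type*} [TopologicalSpace Ω] [LocallyCompactSpace Ω] [T2Space Ω]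
  [NormedAddCommGroup E] [NormedSpace ℂ E] [CompleteSpace E]

theorem norm_apply_le (s : C₀(Ω, E)) (x : Ω) : ‖s x‖ ≤ ‖s‖ := by
  rw [← ZeroAtInftyContinuousMap.norm_toBCF_eq_norm]
  exact s.toBCF.norm_coe_le_norm x

/-- Applying a uniformly bounded, strongly continuous operator family pointwise to a
`C₀` section yields a `C₀` section. -/
noncomputable def applyFam (R : Ω → (E →L[ℂ] E)) (hR : ∀ z : E, Continuous fun x => R x z)
    {C : ℝ} (hC : ∀ x, ‖R x‖ ≤ C) (s : C₀(Ω, E)) : C₀(Ω, E) where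
  toFun := fun x => R x (s x)
  continuous_toFun := by
    rw [continuous_iff_continuousAt]
    intro y
    rw [ContinuousAt, tendsto_iff_norm_sub_tendsto_zero]
    apply squeeze_zero_norm (a := fun x => C * ‖s x - s y‖ + ‖R x (s y) - R y (s y)‖)
    · intro x
      rw [norm_norm]
      calc ‖R x (s x) - R y (s y)‖
          = ‖R x (s x - s y) + (R x (s y) - R y (s y))‖ := by rw [map_sub]; congr 1; abel
        _ ≤ ‖R x (s x - s y)‖ + ‖R x (s y) - R y (s y)‖ := norm_add_le _ _
        _ ≤ C * ‖s x - s y‖ + ‖R x (s y) - R y (s y)‖ := by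
            gcongr
            exact ((R x).le_opNorm _).trans
              (mul_le_mul_of_nonneg_right (hC x) (norm_nonneg _))
    · have h1 : Tendsto (fun x => C * ‖s x - s y‖) (nhds y) (nhds (C * ‖s y - s y‖)) :=
        (continuous_const.mul (((map_continuous s).sub continuous_const).norm)).tendsto y
      have h2 : Tendsto (fun x => ‖R x (s y) - R y (s y)‖) (nhds y) (nhds 0) :=
        tendsto_iff_norm_sub_tendsto_zero.mp ((hR (s y)).tendsto y)
      simpa using h1.add h2
  zero_at_infty' := by
    apply squeeze_zero_norm (a := fun x => C * ‖s x‖)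
    · intro x
      exact ((R x).le_opNorm _).trans (mul_le_mul_of_nonneg_right (hC x) (norm_nonneg _))
    · have := (zero_at_infty s).norm
      simpa using this.const_mul C

@[simp] theorem applyFam_apply (R : Ω → (E →L[ℂ] E)) (hR : ∀ z : E, Continuous fun x => R x z)
    {C : ℝ} (hC : ∀ x, ‖R x‖ ≤ C) (s : C₀(Ω, E)) (x : Ω) :
    applyFam R hR hC s x = R x (s x) := rfl

/-- A compactly supported bump times a continuous function is in `C₀`. -/
noncomputable def bump (f : C(Ω, ℝ)) (hf : HasCompactSupport f) {g : Ω → E}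
    (hg : Continuous g) : C₀(Ω, E) where
  toFun := fun x => f x • g x
  continuous_toFun := (map_continuous f).smul hg
  zero_at_infty' := (hf.smul_right (f' := g)).is_zero_at_infty

@[simp] theorem bump_apply (f : C(Ω, ℝ)) (hf : HasCompactSupport f) {g : Ω → E}
    (hg : Continuous g) (x : Ω) : bump f hf hg x = f x • g x := rfl

end MultOpAux

open MultOpAux

theorem multiplication_operator_resolvent_set (Ω E : Type*) [TopologicalSpace Ω]
    [LocallyCompactSpace Ω] [T2Space Ω] [NormedAddCommGroup E] [NormedSpace ℂ E]
    [CompleteSpace E] (φ : Ω → (E →L[ℂ] E)) (hφ : ∀ z : E, Continuous fun x => φ x z)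
    (lam : ℂ) :
    (∃ T : C₀(Ω, E) →L[ℂ] C₀(Ω, E),
      -- `T ((λ - M_φ) s) = s` for all `s ∈ D(M_φ)`
      (∀ s u : C₀(Ω, E), (∀ x, u x = φ x (s x)) → T (lam • s - u) = s) ∧
      -- `T s ∈ D(M_φ)` and `(λ - M_φ) (T s) = s` for all `s`
      (∀ s : C₀(Ω, E), ∃ u : C₀(Ω, E), (∀ x, u x = φ x (T s x)) ∧ lam • T s - u = s)) ↔
    ((∀ x, lam ∈ resolventSet ℂ (φ x)) ∧
      ∃ C : ℝ, ∀ x, ‖Ring.inverse (algebraMap ℂ (E →L[ℂ] E) lam - φ x)‖ ≤ C) := by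
  set A : Ω → (E →L[ℂ] E) := fun x => algebraMap ℂ (E →L[ℂ] E) lam - φ x with hA
  have hAapp : ∀ (x : Ω) (z : E), A x z = lam • z - φ x z := by
    intro x z
    simp [hA, Algebra.algebraMap_eq_smul_one]
  constructor
  · rintro ⟨T, hT1, hT2⟩
    -- the key norm bound `‖z‖ ≤ ‖T‖ * ‖A x₀ z‖`
    have key : ∀ (x₀ : Ω) (z : E), ‖z‖ ≤ ‖T‖ * ‖A x₀ z‖ := by
      intro x₀ z
      refine le_of_forall_pos_le_add fun ε hε => ?_
      set δ : ℝ := ε / (‖T‖ + 1) with hδdef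
      have hδ : 0 < δ := div_pos hε (by positivity)
      set U : Set Ω := (fun x => φ x z) ⁻¹' Metric.ball (φ x₀ z) δ with hU
      have hUopen : IsOpen U := (hφ z).isOpen_preimage _ Metric.isOpen_ball
      have hx₀U : x₀ ∈ U := by simp [hU, hδ]
      obtain ⟨f, hf1, hf0, hfc, hf01⟩ :=
        exists_continuous_one_zero_of_isCompact (isCompact_singleton (x := x₀))
          hUopen.isClosed_compl (by simpa using hx₀U)
      set s₀ : C₀(Ω, E) := bump f hfc (continuous_const : Continuous fun _ : Ω => z) with hs₀
      set u₀ : C₀(Ω, E) := bump f hfc (hφ z) with hu₀def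
      have hu₀ : ∀ x, u₀ x = φ x (s₀ x) := by
        intro x
        show f x • φ x z = φ x (f x • z)
        exact ((φ x).map_smul_of_tower (f x) z).symm
      have hTv := hT1 s₀ u₀ hu₀
      have hfx₀ : f x₀ = 1 := by simpa using hf1 rfl
      have hs₀x₀ : s₀ x₀ = z := by show f x₀ • z = z; rw [hfx₀, one_smul]
      set v : C₀(Ω, E) := lam • s₀ - u₀ with hv
      have hvapp : ∀ x, v x = f x • A x z := by
        intro x
        show lam • (f x • z) - f x • φ x z = f x • A x z
        rw [hAapp, smul_sub, smul_comm]
      have hvnorm : ‖v‖ ≤ ‖A x₀ z‖ + δ := by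
        rw [← ZeroAtInftyContinuousMap.norm_toBCF_eq_norm]
        refine (BoundedContinuousFunction.norm_le (add_nonneg (norm_nonneg _) hδ.le)).2 fun x => ?_
        show ‖v x‖ ≤ _
        rw [hvapp]
        by_cases hx : x ∈ U
        · have hAx : ‖A x z‖ ≤ ‖A x₀ z‖ + δ := by
            have hd : ‖A x z - A x₀ z‖ ≤ δ := by
              have h1 : ‖φ x z - φ x₀ z‖ < δ := by
                have := hx
                rw [hU, mem_preimage, Metric.mem_ball, dist_eq_norm] at this
                exact this
              have h2 : A x z - A x₀ z = -(φ x z - φ x₀ z) := by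
                rw [hAapp, hAapp]; abel
              rw [h2, norm_neg]
              exact h1.le
            calc ‖A x z‖ = ‖A x₀ z + (A x z - A x₀ z)‖ := by congr 1; abel
              _ ≤ ‖A x₀ z‖ + ‖A x z - A x₀ z‖ := norm_add_le _ _
              _ ≤ ‖A x₀ z‖ + δ := by gcongr
          calc ‖f x • A x z‖ = ‖f x‖ * ‖A x z‖ := norm_smul _ _
            _ ≤ 1 * (‖A x₀ z‖ + δ) := by
                apply mul_le_mul _ hAx (norm_nonneg _) zero_le_one
                rw [Real.norm_eq_abs, abs_le]
                exact ⟨by linarith [(hf01 x).1], (hf01 x).2⟩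
            _ = ‖A x₀ z‖ + δ := one_mul _
        · have : f x = 0 := hf0 hx
          rw [this, zero_smul, norm_zero]
          positivity
      have hzval : T v x₀ = z := by rw [hTv, hs₀x₀]
      have hz : ‖z‖ ≤ ‖T‖ * ‖v‖ := by
        calc ‖z‖ = ‖T v x₀‖ := by rw [hzval]
          _ ≤ ‖T v‖ := norm_apply_le _ _
          _ ≤ ‖T‖ * ‖v‖ := T.le_opNorm v
      have hTδ : ‖T‖ * δ ≤ ε := by
        calc ‖T‖ * δ ≤ (‖T‖ + 1) * δ := mul_le_mul_of_nonneg_right (by linarith) hδ.le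
          _ = ε := by rw [hδdef]; field_simp
      calc ‖z‖ ≤ ‖T‖ * ‖v‖ := hz
        _ ≤ ‖T‖ * (‖A x₀ z‖ + δ) := by gcongr
        _ = ‖T‖ * ‖A x₀ z‖ + ‖T‖ * δ := by ring
        _ ≤ ‖T‖ * ‖A x₀ z‖ + ε := by gcongr
    -- surjectivity of `A x₀`
    have surj : ∀ (x₀ : Ω) (w : E), ∃ v : E, A x₀ v = w := by
      intro x₀ w
      obtain ⟨f, hf1, hf0, hfc, hf01⟩ :=
        exists_continuous_one_zero_of_isCompact (isCompact_singleton (x := x₀))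
          isClosed_empty (disjoint_empty _)
      set sw : C₀(Ω, E) := bump f hfc (continuous_const : Continuous fun _ : Ω => w) with hsw
      obtain ⟨u, hu, heq⟩ := hT2 sw
      refine ⟨T sw x₀, ?_⟩
      have hswx : sw x₀ = w := by
        have hfx₀ : f x₀ = 1 := by simpa using hf1 rfl
        show f x₀ • w = w
        rw [hfx₀, one_smul]
      have h := congrArg (fun g : C₀(Ω, E) => g x₀) heq
      simp only [ZeroAtInftyContinuousMap.coe_sub, ZeroAtInftyContinuousMap.coe_smul,
        Pi.sub_apply, Pi.smul_apply] at h
      rw [hu x₀, hswx] at h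
      rw [hAapp]
      exact h
    -- build the units
    have main : ∀ x : Ω, ∃ u : (E →L[ℂ] E)ˣ, (u : E →L[ℂ] E) = A x ∧
        ‖((u⁻¹ : (E →L[ℂ] E)ˣ) : E →L[ℂ] E)‖ ≤ ‖T‖ := by
      intro x
      have hker : LinearMap.ker (A x : E →ₗ[ℂ] E) = ⊥ := by
        rw [LinearMap.ker_eq_bot']
        intro m hm
        have := key x m
        rw [show A x m = 0 from hm, norm_zero, mul_zero] at this
        exact norm_le_zero_iff.mp this
      have hrange : LinearMap.range (A x : E →ₗ[ℂ] E) = ⊤ := by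
        rw [LinearMap.range_eq_top]
        exact fun w => surj x w
      let e := ContinuousLinearEquiv.ofBijective (A x) hker hrange
      have he : ∀ z : E, e z = A x z := fun z => rfl
      refine ⟨⟨A x, (e.symm : E →L[ℂ] E), ?_, ?_⟩, rfl, ?_⟩
      · ext w
        simp only [ContinuousLinearMap.mul_apply, ContinuousLinearMap.one_apply,
          ContinuousLinearEquiv.coe_coe]
        rw [← he]
        exact e.apply_symm_apply w
      · ext w
        simp only [ContinuousLinearMap.mul_apply, ContinuousLinearMap.one_apply,
          ContinuousLinearEquiv.coe_coe]
        rw [← he]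
        exact e.symm_apply_apply w
      · apply ContinuousLinearMap.opNorm_le_bound _ (norm_nonneg T)
        intro w
        calc ‖(e.symm : E →L[ℂ] E) w‖ ≤ ‖T‖ * ‖A x ((e.symm : E →L[ℂ] E) w)‖ := key x _
          _ = ‖T‖ * ‖w‖ := by
              rw [← he]
              simp
    constructor
    · intro x
      obtain ⟨u, hcoe, _⟩ := main x
      exact spectrum.mem_resolventSet_iff.mpr ⟨u, hcoe⟩
    · refine ⟨‖T‖, fun x => ?_⟩
      obtain ⟨u, hcoe, hbd⟩ := main x
      have : Ring.inverse (A x) = ((u⁻¹ : (E →L[ℂ] E)ˣ) : E →L[ℂ] E) := by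
        rw [← hcoe, Ring.inverse_unit]
      rw [show algebraMap ℂ (E →L[ℂ] E) lam - φ x = A x from rfl, this]
      exact hbd
  · rintro ⟨hres, C, hC⟩
    have hunit : ∀ x, IsUnit (A x) := fun x => spectrum.mem_resolventSet_iff.mp (hres x)
    set R : Ω → (E →L[ℂ] E) := fun x => Ring.inverse (A x) with hRdef
    have hRA : ∀ (x : Ω) (v : E), R x (A x v) = v := by
      intro x v
      have := congrArg (fun g : E →L[ℂ] E => g v) (Ring.inverse_mul_cancel (A x) (hunit x))
      simpa [ContinuousLinearMap.mul_apply] using this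
    have hAR : ∀ (x : Ω) (v : E), A x (R x v) = v := by
      intro x v
      have := congrArg (fun g : E →L[ℂ] E => g v) (Ring.mul_inverse_cancel (A x) (hunit x))
      simpa [ContinuousLinearMap.mul_apply] using this
    have hCbd : ∀ x, ‖R x‖ ≤ C := hC
    have hRcont : ∀ z : E, Continuous fun x => R x z := by
      intro z
      rw [continuous_iff_continuousAt]
      intro y
      rw [ContinuousAt, tendsto_iff_norm_sub_tendsto_zero]
      set w : E := R y z with hw
      have hkey : ∀ x, R x z - R y z = R x (φ x w - φ y w) := by
        intro x
        have h1 : φ x w - φ y w = z - A x w := by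
          calc φ x w - φ y w = (lam • w - φ y w) - (lam • w - φ x w) := by abel
            _ = A y w - A x w := by rw [hAapp, hAapp]
            _ = z - A x w := by rw [hw, hAR y z]
        rw [h1, map_sub, hRA]
      apply squeeze_zero_norm (a := fun x => C * ‖φ x w - φ y w‖)
      · intro x
        rw [norm_norm, hkey x]
        exact ((R x).le_opNorm _).trans (mul_le_mul_of_nonneg_right (hCbd x) (norm_nonneg _))
      · have : Tendsto (fun x => C * ‖φ x w - φ y w‖) (nhds y)
            (nhds (C * ‖φ y w - φ y w‖)) :=
          (continuous_const.mul (((hφ w).sub continuous_const).norm)).tendsto y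
        simpa using this
    set C' : ℝ := max C 0 with hC'def
    have hC' : ∀ x, ‖R x‖ ≤ C' := fun x => (hCbd x).trans (le_max_left _ _)
    let T : C₀(Ω, E) →L[ℂ] C₀(Ω, E) := LinearMap.mkContinuous
      { toFun := fun s => applyFam R hRcont hC' s
        map_add' := fun s t => by
          ext x
          simp [map_add]
        map_smul' := fun c s => by
          ext x
          simp }
      C' (fun s => by
        rw [← ZeroAtInftyContinuousMap.norm_toBCF_eq_norm]
        refine (BoundedContinuousFunction.norm_le (by positivity)).2 fun x => ?_
        show ‖R x (s x)‖ ≤ C' * ‖s‖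
        calc ‖R x (s x)‖ ≤ ‖R x‖ * ‖s x‖ := (R x).le_opNorm _
          _ ≤ C' * ‖s‖ :=
              mul_le_mul (hC' x) (norm_apply_le s x) (norm_nonneg _) (le_max_right _ _))
    have hTapp : ∀ (v : C₀(Ω, E)) (x : Ω), T v x = R x (v x) := fun v x => rfl
    refine ⟨T, ?_, ?_⟩
    · intro s u hu
      ext x
      have hx : (lam • s - u) x = A x (s x) := by
        simp only [ZeroAtInftyContinuousMap.coe_sub, ZeroAtInftyContinuousMap.coe_smul,
          Pi.sub_apply, Pi.smul_apply]
        rw [hu x, hAapp]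
      calc T (lam • s - u) x = R x ((lam • s - u) x) := hTapp _ _
        _ = R x (A x (s x)) := by rw [hx]
        _ = s x := hRA x _
    · intro s
      refine ⟨lam • T s - s, fun x => ?_, sub_sub_cancel _ _⟩
      have h1 : lam • (T s x) - φ x (T s x) = s x := by
        rw [← hAapp]
        calc A x (T s x) = A x (R x (s x)) := by rw [hTapp]
          _ = s x := hAR x _
      simp only [ZeroAtInftyContinuousMap.coe_sub, ZeroAtInftyContinuousMap.coe_smul,
        Pi.sub_apply, Pi.smul_apply]
      rw [← h1]
      abel
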